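/- Let B(u) and B be formal power series (B = B(1) being the specialization u = 1) satisfying, with y = a = b = 1, B(u) = tu·T(u)^2 and B(u) = (T(u)-1)(1-B) where T = 1/(1-B) and T(u) = 1 + B(u)T. Then the series P(u) := B(u) - B(u)^2·B/(1-B)^2 satisfies 1 + P(u) = T(u)(1+B) - T(u)^2·B. -/

import Mathlib

/-- The ring `ℚ[[t,u]]`, realized as `ℚ[[t]][[u]]`. -/
abbrev QTU : Type := PowerSeries (PowerSeries ℚ)

/-- The image of a series of `ℚ[[t]]` in `ℚ[[t,u]]`. -/
noncomputable def liftT (f : PowerSeries ℚ) : QTU := PowerSeries.C (R := PowerSeries ℚ) f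

/-- The variable `t` in `ℚ[[t,u]]`. -/
noncomputable def tVar : QTU := liftT PowerSeries.X

/-- The variable `u` in `ℚ[[t,u]]`. -/
noncomputable def uVar : QTU := PowerSeries.X

/-- With `y = a = b = 1`: if `B(u) = tuT(u)^2`, `B(u) = (T(u)-1)(1-B)`, `T = 1/(1-B)`
(i.e. `T(1-B) = 1`) and `T(u) = 1 + B(u)T`, then the series
`P(u) := B(u) - B(u)^2·B/(1-B)^2` (defined multiplicatively, `(1-B)` being invertible)
satisfies `1 + P(u) = T(u)(1+B) - T(u)^2·B`. -/
theorem fish_fin_tree_core_identity (T B : PowerSeries ℚ)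
    (hTB : T * (1 - B) = 1)
    (Bu Tu P : QTU)
    (hBu1 : Bu = tVar * uVar * Tu ^ 2)
    (hBu2 : Bu = (Tu - 1) * (1 - liftT B))
    (hTu : Tu = 1 + Bu * liftT T)
    (hP : P * (1 - liftT B) ^ 2 = Bu * (1 - liftT B) ^ 2 - Bu ^ 2 * liftT B) :
    1 + P = Tu * (1 + liftT B) - Tu ^ 2 * liftT B := by
  set lB := liftT B with hlB
  set lT := liftT T with hlT
  have h1 : lT * (1 - lB) = 1 := by
    have := congrArg liftT hTB
    simpa [hlT, hlB, liftT, map_mul, map_sub, map_one] using this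
  have key : (1 + P) * (1 - lB) ^ 2
      = (Tu * (1 + lB) - Tu ^ 2 * lB) * (1 - lB) ^ 2 := by
    linear_combination hP +
      (-(lB * Bu) + (1 - lB) ^ 2 - (Tu - 1) * (1 - lB) * lB) * hBu2
  linear_combination lT ^ 2 * key -
    ((1 + P) - (Tu * (1 + lB) - Tu ^ 2 * lB)) * (1 + lT * (1 - lB)) * h1
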